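/- The entire function f is of order at most 3/2: there exists a constant D > 0 such that |f(λ)| ≤ D·exp(D|λ|^{3/2}) for all λ ∈ ℂ. -/

import Mathlib

noncomputable section

set_option maxHeartbeats 1000000

namespace AiryAux

lemma even_summable (x : ℝ) : Summable (fun k : ℕ => x ^ (2*k) / ((2*k).factorial : ℝ)) :=
  x.hasSum_cosh.summable

lemma even_tsum_le (x : ℝ) (hx : 0 ≤ x) :
    ∑' k : ℕ, x ^ (2*k) / ((2*k).factorial : ℝ) ≤ Real.exp x := by
  rw [← Real.cosh_eq_tsum, Real.cosh_eq]
  have : Real.exp (-x) ≤ Real.exp x := Real.exp_le_exp.2 (by linarith)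
  linarith

/-- Main helper: if coefficients are bounded by `3^k/(2k)!`, the power series is
entire and bounded by `exp (√(3‖w‖))`. -/
lemma key (a : ℕ → ℂ) (ha : ∀ k, ‖a k‖ ≤ 3 ^ k / ((2*k).factorial : ℝ)) :
    Differentiable ℂ (fun w : ℂ => ∑' k, a k * w ^ k) ∧
    ∀ w : ℂ, ‖∑' k, a k * w ^ k‖ ≤ Real.exp (Real.sqrt (3 * ‖w‖)) := by
  have hterm : ∀ (w : ℂ) (k : ℕ), ‖a k * w ^ k‖ ≤
      (Real.sqrt (3 * ‖w‖)) ^ (2*k) / ((2*k).factorial : ℝ) := by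
    intro w k
    have h1 : (Real.sqrt (3 * ‖w‖)) ^ (2*k) = (3 * ‖w‖) ^ k := by
      rw [pow_mul, Real.sq_sqrt (by positivity)]
    rw [h1, norm_mul, norm_pow, mul_pow]
    calc ‖a k‖ * ‖w‖ ^ k ≤ (3 ^ k / ((2*k).factorial : ℝ)) * ‖w‖ ^ k := by
          gcongr; exact ha k
      _ = 3 ^ k * ‖w‖ ^ k / ((2*k).factorial : ℝ) := by ring
  have hsum : ∀ w : ℂ, Summable (fun k => ‖a k * w ^ k‖) := fun w =>
    Summable.of_nonneg_of_le (fun k => norm_nonneg _) (hterm w) (even_summable _)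
  constructor
  · -- differentiability via power series
    have heq : (fun w : ℂ => ∑' k, a k * w ^ k) = (FormalMultilinearSeries.ofScalars ℂ a).sum := by
      funext w
      rw [FormalMultilinearSeries.sum]
      exact tsum_congr fun k => by
        rw [FormalMultilinearSeries.ofScalars_apply_eq, smul_eq_mul]
    have hrad : (FormalMultilinearSeries.ofScalars ℂ a).radius = ⊤ := by
      apply FormalMultilinearSeries.radius_eq_top_of_summable_norm
      intro r
      refine Summable.of_nonneg_of_le (fun k => by positivity) (fun k => ?_)
        (even_summable (Real.sqrt (3 * (r:ℝ))))
      have h1 : (Real.sqrt (3 * (r:ℝ))) ^ (2*k) = (3 * (r:ℝ)) ^ k := by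
        rw [pow_mul, Real.sq_sqrt (by positivity)]
      rw [h1, FormalMultilinearSeries.ofScalars_norm, mul_pow]
      calc ‖a k‖ * (r:ℝ) ^ k ≤ (3 ^ k / ((2*k).factorial : ℝ)) * (r:ℝ) ^ k := by
            gcongr; exact ha k
        _ = 3 ^ k * (r:ℝ) ^ k / ((2*k).factorial : ℝ) := by ring
    rw [heq]
    intro w
    have := ((FormalMultilinearSeries.ofScalars ℂ a).hasFPowerSeriesOnBall
      (by rw [hrad]; exact ENNReal.zero_lt_top)).analyticAt_of_mem (y := w) (by
        rw [hrad]; simp [EMetric.mem_ball])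
    exact this.differentiableAt
  · intro w
    have h1 : ‖∑' k, a k * w ^ k‖ ≤ ∑' k, ‖a k * w ^ k‖ := norm_tsum_le_tsum_norm (hsum w)
    have h2 : ∑' k, ‖a k * w ^ k‖ ≤
        ∑' k, (Real.sqrt (3 * ‖w‖)) ^ (2*k) / ((2*k).factorial : ℝ) :=
      Summable.tsum_le_tsum (hterm w) (hsum w) (even_summable (Real.sqrt (3 * ‖w‖)))
    exact h1.trans (h2.trans (even_tsum_le _ (Real.sqrt_nonneg _)))

/-- First Airy coefficient sequence. -/
def a1 (k : ℕ) : ℂ := (∏ j ∈ Finset.range k, ((3*j+1 : ℕ) : ℂ)) / (((3*k).factorial : ℕ) : ℂ)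

/-- Second Airy coefficient sequence. -/
def a2 (k : ℕ) : ℂ := (∏ j ∈ Finset.range k, ((3*j+2 : ℕ) : ℂ)) / (((3*k+1).factorial : ℕ) : ℂ)

lemma prod1_le (k : ℕ) : (∏ j ∈ Finset.range k, (3*j+1)) ≤ 3 ^ k * k.factorial := by
  induction k with
  | zero => simp
  | succ n ih =>
    rw [Finset.prod_range_succ, pow_succ, Nat.factorial_succ]
    calc (∏ j ∈ Finset.range n, (3*j+1)) * (3*n+1)
        ≤ (3 ^ n * n.factorial) * (3*(n+1)) := by
          apply Nat.mul_le_mul ih; omega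
      _ = 3 ^ n * 3 * ((n+1) * n.factorial) := by ring

lemma prod2_le (k : ℕ) : (∏ j ∈ Finset.range k, (3*j+2)) ≤ 3 ^ k * k.factorial := by
  induction k with
  | zero => simp
  | succ n ih =>
    rw [Finset.prod_range_succ, pow_succ, Nat.factorial_succ]
    calc (∏ j ∈ Finset.range n, (3*j+2)) * (3*n+2)
        ≤ (3 ^ n * n.factorial) * (3*(n+1)) := by
          apply Nat.mul_le_mul ih; omega
      _ = 3 ^ n * 3 * ((n+1) * n.factorial) := by ring

lemma fact_le (k : ℕ) : k.factorial * (2*k).factorial ≤ (3*k).factorial := by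
  have h := Nat.factorial_mul_factorial_dvd_factorial_add k (2*k)
  have h3 : k + 2*k = 3*k := by ring
  rw [h3] at h
  exact Nat.le_of_dvd (Nat.factorial_pos _) h

lemma nat_bound1 (k : ℕ) :
    (∏ j ∈ Finset.range k, (3*j+1)) * (2*k).factorial ≤ 3 ^ k * (3*k).factorial :=
  calc (∏ j ∈ Finset.range k, (3*j+1)) * (2*k).factorial
      ≤ (3 ^ k * k.factorial) * (2*k).factorial := Nat.mul_le_mul_right _ (prod1_le k)
    _ = 3 ^ k * (k.factorial * (2*k).factorial) := by ring
    _ ≤ 3 ^ k * (3*k).factorial := Nat.mul_le_mul_left _ (fact_le k)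

lemma nat_bound2 (k : ℕ) :
    (∏ j ∈ Finset.range k, (3*j+2)) * (2*k).factorial ≤ 3 ^ k * (3*k+1).factorial :=
  calc (∏ j ∈ Finset.range k, (3*j+2)) * (2*k).factorial
      ≤ (3 ^ k * k.factorial) * (2*k).factorial := Nat.mul_le_mul_right _ (prod2_le k)
    _ = 3 ^ k * (k.factorial * (2*k).factorial) := by ring
    _ ≤ 3 ^ k * (3*k).factorial := Nat.mul_le_mul_left _ (fact_le k)
    _ ≤ 3 ^ k * (3*k+1).factorial :=
        Nat.mul_le_mul_left _ (Nat.factorial_le (by omega))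

lemma a1_bound (k : ℕ) : ‖a1 k‖ ≤ 3 ^ k / ((2*k).factorial : ℝ) := by
  rw [a1, norm_div]
  rw [show (∏ j ∈ Finset.range k, ((3*j+1 : ℕ) : ℂ)) =
    (((∏ j ∈ Finset.range k, (3*j+1) : ℕ) : ℂ)) by push_cast; ring]
  rw [Complex.norm_natCast, Complex.norm_natCast]
  rw [div_le_div_iff₀ (by positivity) (by positivity)]
  exact_mod_cast nat_bound1 k

lemma a2_bound (k : ℕ) : ‖a2 k‖ ≤ 3 ^ k / ((2*k).factorial : ℝ) := by
  rw [a2, norm_div]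
  rw [show (∏ j ∈ Finset.range k, ((3*j+2 : ℕ) : ℂ)) =
    (((∏ j ∈ Finset.range k, (3*j+2) : ℕ) : ℂ)) by push_cast; ring]
  rw [Complex.norm_natCast, Complex.norm_natCast]
  rw [div_le_div_iff₀ (by positivity) (by positivity)]
  exact_mod_cast nat_bound2 k

end AiryAux

/-- The Airy function, defined by its entire power series. -/
def Ai (z : ℂ) : ℂ :=
  (((3 : ℝ) ^ (-(2:ℝ)/3) / Real.Gamma (2/3) : ℝ) : ℂ) *
    ∑' k : ℕ, (∏ j ∈ Finset.range k, ((3*j+1 : ℕ) : ℂ)) * z ^ (3*k) / ((3*k).factorial : ℂ)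
  + ((-((3 : ℝ) ^ (-(1:ℝ)/3)) / Real.Gamma (1/3) : ℝ) : ℂ) *
    ∑' k : ℕ, (∏ j ∈ Finset.range k, ((3*j+2 : ℕ) : ℂ)) * z ^ (3*k+1) / ((3*k+1).factorial : ℂ)

namespace AiryAux

def A : ℝ := (3 : ℝ) ^ (-(2:ℝ)/3) / Real.Gamma (2/3)
def B : ℝ := -((3 : ℝ) ^ (-(1:ℝ)/3)) / Real.Gamma (1/3)

lemma Ai_eq : Ai = fun z : ℂ =>
    (A : ℂ) * (∑' k : ℕ, a1 k * (z^3) ^ k) + (B : ℂ) * (z * ∑' k : ℕ, a2 k * (z^3) ^ k) := by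
  funext z
  rw [Ai, A, B]
  congr 1
  · congr 1
    refine tsum_congr fun k => ?_
    rw [a1, ← pow_mul]
    push_cast
    ring
  · congr 1
    rw [← tsum_mul_left]
    refine tsum_congr fun k => ?_
    rw [a2, ← pow_mul, pow_succ']
    push_cast
    ring

lemma Ai_differentiable : Differentiable ℂ Ai := by
  rw [Ai_eq]
  have h1 := (key a1 a1_bound).1
  have h2 := (key a2 a2_bound).1
  have hcube : Differentiable ℂ (fun z : ℂ => z ^ 3) := differentiable_pow 3
  exact ((h1.comp hcube).const_mul _).add
    ((differentiable_id.mul (h2.comp hcube)).const_mul _)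

lemma sqrt_cube_le (t : ℝ) (ht : 0 ≤ t) : Real.sqrt (3 * t ^ 3) ≤ 2 * t ^ ((3:ℝ)/2) := by
  rw [Real.sqrt_mul (by norm_num) (t^3)]
  have h1 : Real.sqrt 3 ≤ 2 := by
    rw [show (2:ℝ) = Real.sqrt 4 by rw [show (4:ℝ) = 2^2 by norm_num, Real.sqrt_sq]; norm_num]
    exact Real.sqrt_le_sqrt (by norm_num)
  have h2 : Real.sqrt (t ^ 3) = t ^ ((3:ℝ)/2) := by
    rw [Real.sqrt_eq_rpow, ← Real.rpow_natCast t 3, ← Real.rpow_mul ht]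
    norm_num
  rw [h2]
  exact mul_le_mul_of_nonneg_right h1 (Real.rpow_nonneg ht _)

lemma Ai_growth : ∃ M > (0:ℝ), ∀ z : ℂ,
    ‖Ai z‖ ≤ M * (1 + ‖z‖) * Real.exp (2 * ‖z‖ ^ ((3:ℝ)/2)) := by
  refine ⟨|A| + |B| + 1, by positivity, fun z => ?_⟩
  have h1 := (key a1 a1_bound).2 (z^3)
  have h2 := (key a2 a2_bound).2 (z^3)
  have hcube : ‖z ^ 3‖ = ‖z‖ ^ 3 := norm_pow z 3
  have hle : Real.sqrt (3 * ‖z ^ 3‖) ≤ 2 * ‖z‖ ^ ((3:ℝ)/2) := by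
    rw [hcube]; exact sqrt_cube_le ‖z‖ (norm_nonneg z)
  have hexp : Real.exp (Real.sqrt (3 * ‖z ^ 3‖)) ≤ Real.exp (2 * ‖z‖ ^ ((3:ℝ)/2)) :=
    Real.exp_le_exp.2 hle
  rw [Ai_eq]
  have e1 : ‖(A : ℂ) * (∑' k : ℕ, a1 k * (z^3) ^ k)‖ ≤ |A| * Real.exp (2 * ‖z‖ ^ ((3:ℝ)/2)) := by
    rw [norm_mul, Complex.norm_real, Real.norm_eq_abs]
    exact mul_le_mul_of_nonneg_left (h1.trans hexp) (abs_nonneg A)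
  have e2 : ‖(B : ℂ) * (z * ∑' k : ℕ, a2 k * (z^3) ^ k)‖ ≤
      |B| * (‖z‖ * Real.exp (2 * ‖z‖ ^ ((3:ℝ)/2))) := by
    rw [norm_mul, norm_mul, Complex.norm_real, Real.norm_eq_abs]
    exact mul_le_mul_of_nonneg_left
      (mul_le_mul_of_nonneg_left (h2.trans hexp) (norm_nonneg z)) (abs_nonneg B)
  calc ‖_ + _‖ ≤ _ + _ := norm_add_le _ _
    _ ≤ |A| * Real.exp (2 * ‖z‖ ^ ((3:ℝ)/2)) +
        |B| * (‖z‖ * Real.exp (2 * ‖z‖ ^ ((3:ℝ)/2))) := add_le_add e1 e2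
    _ ≤ (|A| + |B| + 1) * (1 + ‖z‖) * Real.exp (2 * ‖z‖ ^ ((3:ℝ)/2)) := by
        have hz : (0:ℝ) ≤ ‖z‖ := norm_nonneg z
        have he : (0:ℝ) < Real.exp (2 * ‖z‖ ^ ((3:ℝ)/2)) := Real.exp_pos _
        nlinarith [abs_nonneg A, abs_nonneg B, mul_nonneg (abs_nonneg A) hz,
          mul_nonneg (abs_nonneg B) hz, he.le]

lemma aux_linear (t : ℝ) (ht : 0 ≤ t) : 2 + t ≤ 3 * Real.exp (t ^ ((3:ℝ)/2)) := by
  set x := t ^ ((3:ℝ)/2) with hx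
  have hx0 : 0 ≤ x := Real.rpow_nonneg ht _
  have hex : x + 1 ≤ Real.exp x := Real.add_one_le_exp x
  rcases le_total t 1 with h | h
  · have h1 : (1:ℝ) ≤ Real.exp x := Real.one_le_exp hx0
    linarith
  · have htx : t ≤ x := by
      calc t = t ^ ((1:ℝ)) := (Real.rpow_one t).symm
        _ ≤ t ^ ((3:ℝ)/2) := Real.rpow_le_rpow_of_exponent_le h (by norm_num)
    have h1 : (1:ℝ) ≤ Real.exp x := Real.one_le_exp hx0
    linarith

lemma two_rpow_le : (2:ℝ) ^ ((3:ℝ)/2) ≤ 4 := by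
  calc (2:ℝ) ^ ((3:ℝ)/2) ≤ (2:ℝ) ^ ((2:ℝ)) :=
        Real.rpow_le_rpow_of_exponent_le one_le_two (by norm_num)
    _ = 4 := by
        rw [show ((2:ℝ):ℝ) = ((2:ℕ):ℝ) by norm_num, Real.rpow_natCast]; norm_num

lemma aux_rpow (t : ℝ) (ht : 0 ≤ t) : (t+1) ^ ((3:ℝ)/2) ≤ 4 * t ^ ((3:ℝ)/2) + 4 := by
  have ht0 : 0 ≤ t ^ ((3:ℝ)/2) := Real.rpow_nonneg ht _
  rcases le_total t 1 with h | h
  · have h1 : (t+1) ^ ((3:ℝ)/2) ≤ (2:ℝ) ^ ((3:ℝ)/2) :=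
      Real.rpow_le_rpow (by linarith) (by linarith) (by norm_num)
    linarith [two_rpow_le]
  · have h1 : (t+1) ^ ((3:ℝ)/2) ≤ ((2*t):ℝ) ^ ((3:ℝ)/2) :=
      Real.rpow_le_rpow (by linarith) (by linarith) (by norm_num)
    have h2 : ((2*t):ℝ) ^ ((3:ℝ)/2) = (2:ℝ) ^ ((3:ℝ)/2) * t ^ ((3:ℝ)/2) :=
      Real.mul_rpow (by norm_num) ht
    have h3 : (2:ℝ) ^ ((3:ℝ)/2) * t ^ ((3:ℝ)/2) ≤ 4 * t ^ ((3:ℝ)/2) :=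
      mul_le_mul_of_nonneg_right two_rpow_le ht0
    linarith

end AiryAux

/-- The derivative of the Airy function. -/
def Ai' (z : ℂ) : ℂ := deriv Ai z

namespace AiryAux

lemma Ai'_growth : ∃ C > (0:ℝ), ∀ z : ℂ,
    ‖Ai' z‖ ≤ C * Real.exp (C * ‖z‖ ^ ((3:ℝ)/2)) := by
  obtain ⟨M, hM, hbound⟩ := Ai_growth
  refine ⟨3 * M * Real.exp 8 + 9, by positivity, fun z => ?_⟩
  set t := ‖z‖ with htdef
  have ht : 0 ≤ t := norm_nonneg z
  have ht32 : 0 ≤ t ^ ((3:ℝ)/2) := Real.rpow_nonneg ht _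
  have step1 : ‖Ai' z‖ ≤ M * (2 + t) * Real.exp (2 * (t+1) ^ ((3:ℝ)/2)) := by
    have := Complex.norm_deriv_le_of_forall_mem_sphere_norm_le (c := z) (R := 1)
      one_pos (Ai_differentiable.diffContOnCl) (C := M * (2 + t) * Real.exp (2 * (t+1) ^ ((3:ℝ)/2)))
      (fun w hw => ?_)
    · simpa [Ai'] using this
    · have hw1 : ‖w‖ ≤ t + 1 := by
        have : dist w z = 1 := hw
        calc ‖w‖ = ‖z + (w - z)‖ := by ring_nf
          _ ≤ ‖z‖ + ‖w - z‖ := norm_add_le _ _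
          _ = t + 1 := by rw [← dist_eq_norm w z] at *; rw [this]
      calc ‖Ai w‖ ≤ M * (1 + ‖w‖) * Real.exp (2 * ‖w‖ ^ ((3:ℝ)/2)) := hbound w
        _ ≤ M * (2 + t) * Real.exp (2 * (t+1) ^ ((3:ℝ)/2)) := by
            apply mul_le_mul
            · apply mul_le_mul_of_nonneg_left _ hM.le
              linarith
            · apply Real.exp_le_exp.2
              apply mul_le_mul_of_nonneg_left _ (by norm_num : (0:ℝ) ≤ 2)
              exact Real.rpow_le_rpow (norm_nonneg w) hw1 (by norm_num)
            · positivity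
            · have : (0:ℝ) ≤ 2 + t := by linarith
              positivity
  have step2 : M * (2 + t) * Real.exp (2 * (t+1) ^ ((3:ℝ)/2)) ≤
      3 * M * Real.exp 8 * Real.exp (9 * t ^ ((3:ℝ)/2)) := by
    have h1 : 2 + t ≤ 3 * Real.exp (t ^ ((3:ℝ)/2)) := aux_linear t ht
    have h2 : Real.exp (2 * (t+1) ^ ((3:ℝ)/2)) ≤ Real.exp (8 * t ^ ((3:ℝ)/2) + 8) := by
      apply Real.exp_le_exp.2
      have := aux_rpow t ht
      linarith
    calc M * (2 + t) * Real.exp (2 * (t+1) ^ ((3:ℝ)/2))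
        ≤ M * (3 * Real.exp (t ^ ((3:ℝ)/2))) * Real.exp (8 * t ^ ((3:ℝ)/2) + 8) := by
          apply mul_le_mul
          · exact mul_le_mul_of_nonneg_left h1 hM.le
          · exact h2
          · positivity
          · positivity
      _ = 3 * M * Real.exp 8 * Real.exp (9 * t ^ ((3:ℝ)/2)) := by
          rw [Real.exp_add (8 * t ^ ((3:ℝ)/2)) 8,
            show (9:ℝ) * t ^ ((3:ℝ)/2) = t ^ ((3:ℝ)/2) + 8 * t ^ ((3:ℝ)/2) by ring,
            Real.exp_add]
          ring
  have step3 : 3 * M * Real.exp 8 * Real.exp (9 * t ^ ((3:ℝ)/2)) ≤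
      (3 * M * Real.exp 8 + 9) * Real.exp ((3 * M * Real.exp 8 + 9) * t ^ ((3:ℝ)/2)) := by
    have hMe : (0:ℝ) < 3 * M * Real.exp 8 := by positivity
    apply mul_le_mul
    · linarith
    · apply Real.exp_le_exp.2
      apply mul_le_mul_of_nonneg_right _ ht32
      linarith
    · positivity
    · positivity
  exact step1.trans (step2.trans step3)

end AiryAux

/-- The angle α = 2π/3. -/
def α : ℝ := 2 * Real.pi / 3

/-- f(λ) = 2π Ai'(e^{-iα}λ) Ai'(e^{iα}λ). -/
def f (lam : ℂ) : ℂ :=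
  2 * Real.pi * Ai' (Complex.exp (-(α:ℂ) * Complex.I) * lam) *
    Ai' (Complex.exp ((α:ℂ) * Complex.I) * lam)

/-- The entire function `f` is of order at most `3/2`:
there is `D > 0` with `|f(λ)| ≤ D exp(D |λ|^{3/2})` for all `λ`. -/
theorem f_order_three_halves :
    ∃ D > (0:ℝ), ∀ lam : ℂ,
      ‖f lam‖ ≤ D * Real.exp (D * ‖lam‖ ^ ((3:ℝ)/2)) := by
  obtain ⟨C, hC, hbound⟩ := AiryAux.Ai'_growth
  refine ⟨7 * C^2 + 2 * C, by positivity, fun lam => ?_⟩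
  have habs1 : ‖Complex.exp (-(α:ℂ) * Complex.I) * lam‖ = ‖lam‖ := by
    rw [norm_mul, Complex.norm_exp]
    simp
  have habs2 : ‖Complex.exp ((α:ℂ) * Complex.I) * lam‖ = ‖lam‖ := by
    rw [norm_mul, Complex.norm_exp]
    simp
  set t := ‖lam‖ with htdef
  have ht : 0 ≤ t := norm_nonneg lam
  have ht32 : 0 ≤ t ^ ((3:ℝ)/2) := Real.rpow_nonneg ht _
  have h1 : ‖Ai' (Complex.exp (-(α:ℂ) * Complex.I) * lam)‖ ≤
      C * Real.exp (C * t ^ ((3:ℝ)/2)) := by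
    have := hbound (Complex.exp (-(α:ℂ) * Complex.I) * lam)
    rwa [habs1] at this
  have h2 : ‖Ai' (Complex.exp ((α:ℂ) * Complex.I) * lam)‖ ≤
      C * Real.exp (C * t ^ ((3:ℝ)/2)) := by
    have := hbound (Complex.exp ((α:ℂ) * Complex.I) * lam)
    rwa [habs2] at this
  have hfnorm : ‖f lam‖ = 2 * Real.pi * ‖Ai' (Complex.exp (-(α:ℂ) * Complex.I) * lam)‖ *
      ‖Ai' (Complex.exp ((α:ℂ) * Complex.I) * lam)‖ := by
    rw [f, norm_mul, norm_mul]
    congr 2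
    simp [abs_of_nonneg Real.pi_pos.le]
  rw [hfnorm]
  have hpi : Real.pi ≤ 3.5 := by linarith [Real.pi_lt_d2]
  calc 2 * Real.pi * ‖Ai' (Complex.exp (-(α:ℂ) * Complex.I) * lam)‖ *
      ‖Ai' (Complex.exp ((α:ℂ) * Complex.I) * lam)‖
      ≤ 2 * Real.pi * (C * Real.exp (C * t ^ ((3:ℝ)/2))) * (C * Real.exp (C * t ^ ((3:ℝ)/2))) := by
        apply mul_le_mul _ h2 (norm_nonneg _) (by positivity)
        exact mul_le_mul_of_nonneg_left h1 (by positivity)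
    _ = 2 * Real.pi * C^2 * Real.exp (2 * C * t ^ ((3:ℝ)/2)) := by
        rw [show (2:ℝ) * C * t ^ ((3:ℝ)/2) = C * t ^ ((3:ℝ)/2) + C * t ^ ((3:ℝ)/2) by ring,
          Real.exp_add]
        ring
    _ ≤ (7 * C^2 + 2 * C) * Real.exp ((7 * C^2 + 2 * C) * t ^ ((3:ℝ)/2)) := by
        apply mul_le_mul
        · nlinarith
        · apply Real.exp_le_exp.2
          apply mul_le_mul_of_nonneg_right _ ht32
          nlinarith
        · positivity
        · positivity
  
end
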